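/- For any m × n matrix A with the (k,D)-RIP-p property and p > 2, either m ≥ n/(2k) or m ≥ Ω(k^p / D^{p^2/(p-2)}). -/

import Mathlib

open Finset

/-- Power mean / Hölder: `‖v‖₂² ≤ m^(1-2/p) ‖v‖_p²` on `ℝ^m`. -/
lemma sum_sq_le_rpow {m : ℕ} (hm : 0 < m) {p : ℝ} (hp : 2 < p) (v : Fin m → ℝ) :
    ∑ i, v i ^ 2 ≤ (m : ℝ) ^ (1 - 2/p) * (∑ i, |v i| ^ p) ^ (2/p) := by
  have hp0 : (0:ℝ) < p := by linarith
  have hm0 : (0:ℝ) < (m:ℝ) := by exact_mod_cast hm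
  have hp2 : (1:ℝ) ≤ p / 2 := by linarith
  have h := Real.arith_mean_le_rpow_mean (univ : Finset (Fin m))
      (fun _ => (m:ℝ)⁻¹) (fun i => v i ^ 2)
      (fun i _ => by positivity)
      (by simp [Finset.card_univ, mul_inv_cancel₀ hm0.ne'])
      (fun i _ => sq_nonneg _) hp2
  have hz : ∀ i : Fin m, (v i ^ 2) ^ (p/2) = |v i| ^ p := by
    intro i
    rw [← sq_abs, ← Real.rpow_natCast |v i| 2, ← Real.rpow_mul (abs_nonneg _)]
    norm_num
    congr 1
    ring
  simp only [hz] at h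
  rw [one_div, inv_div] at h
  -- h : ∑ i, m⁻¹ * v i ^ 2 ≤ (∑ i, m⁻¹ * |v i| ^ p) ^ (2/p)
  rw [← Finset.mul_sum, ← Finset.mul_sum,
      Real.mul_rpow (by positivity) (by positivity)] at h
  have h2 : (m:ℝ) * ((m:ℝ)⁻¹ * ∑ i, v i ^ 2) ≤
      (m:ℝ) * (((m:ℝ)⁻¹) ^ (2/p) * (∑ i, |v i| ^ p) ^ (2/p)) :=
    mul_le_mul_of_nonneg_left h hm0.le
  rw [← mul_assoc, mul_inv_cancel₀ hm0.ne', one_mul, ← mul_assoc] at h2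
  have h3 : (m:ℝ) * ((m:ℝ)⁻¹) ^ (2/p) = (m:ℝ) ^ (1 - 2/p) := by
    rw [Real.inv_rpow hm0.le, ← Real.rpow_neg hm0.le]
    nth_rewrite 1 [← Real.rpow_one (m:ℝ)]
    rw [← Real.rpow_add hm0]
    ring_nf
  rw [h3] at h2
  exact h2

/-- There is a ±1 sign pattern on `S` making `‖Aε‖₂²` at least the sum of squared column norms. -/
lemma exists_signs {m n : ℕ} (A : Matrix (Fin m) (Fin n) ℝ) (S : Finset (Fin n)) :
    ∃ ε : Fin n → ℝ, (∀ j, j ∉ S → ε j = 0) ∧ (∀ j ∈ S, ε j = 1 ∨ ε j = -1) ∧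
      ∑ j ∈ S, ∑ i, A i j ^ 2 ≤ ∑ i, A.mulVec ε i ^ 2 := by
  classical
  induction S using Finset.induction_on with
  | empty =>
      refine ⟨0, fun j _ => rfl, fun j hj => absurd hj (notMem_empty j), ?_⟩
      simp [Matrix.mulVec_zero]
  | @insert a S ha IH =>
      obtain ⟨ε, hε0, hε1, hεs⟩ := IH
      have hεa : ε a = 0 := hε0 a ha
      set v : Fin m → ℝ := A.mulVec ε with hv
      have hmul : ∀ c : ℝ, A.mulVec (Function.update ε a c) = fun i => v i + A i a * c := by
        intro c
        have hupd : Function.update ε a c = ε + Pi.single a c := by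
          funext j
          rcases eq_or_ne j a with rfl | hne
          · simp [hεa]
          · simp [Function.update_of_ne hne, Pi.single_eq_of_ne hne]
        rw [hupd, Matrix.mulVec_add, Matrix.mulVec_single]
        rfl
      have hpar : ∑ i, (v i + A i a) ^ 2 + ∑ i, (v i - A i a) ^ 2
          = 2 * (∑ i, v i ^ 2) + 2 * (∑ i, A i a ^ 2) := by
        rw [← Finset.sum_add_distrib, Finset.mul_sum, Finset.mul_sum, ← Finset.sum_add_distrib]
        exact Finset.sum_congr rfl fun i _ => by ring
      have hnew : ∑ j ∈ insert a S, ∑ i, A i j ^ 2 = ∑ i, A i a ^ 2 + ∑ j ∈ S, ∑ i, A i j ^ 2 :=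
        Finset.sum_insert ha
      rcases le_or_gt (∑ i, v i ^ 2 + ∑ i, A i a ^ 2) (∑ i, (v i + A i a) ^ 2) with hc | hc
      · refine ⟨Function.update ε a 1, ?_, ?_, ?_⟩
        · intro j hj
          have hja : j ≠ a := by rintro rfl; exact hj (mem_insert_self j S)
          rw [Function.update_of_ne hja]
          exact hε0 j (fun h => hj (mem_insert_of_mem h))
        · intro j hj
          rcases eq_or_ne j a with rfl | hne
          · left; exact Function.update_self _ _ _
          · rw [Function.update_of_ne hne]
            exact hε1 j ((mem_insert.mp hj).resolve_left hne)
        · rw [hmul 1, hnew]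
          simp only [mul_one]
          calc ∑ i, A i a ^ 2 + ∑ j ∈ S, ∑ i, A i j ^ 2
              ≤ ∑ i, A i a ^ 2 + ∑ i, v i ^ 2 := by linarith
            _ ≤ ∑ i, (v i + A i a) ^ 2 := by linarith
      · refine ⟨Function.update ε a (-1), ?_, ?_, ?_⟩
        · intro j hj
          have hja : j ≠ a := by rintro rfl; exact hj (mem_insert_self j S)
          rw [Function.update_of_ne hja]
          exact hε0 j (fun h => hj (mem_insert_of_mem h))
        · intro j hj
          rcases eq_or_ne j a with rfl | hne
          · right; exact Function.update_self _ _ _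
          · rw [Function.update_of_ne hne]
            exact hε1 j ((mem_insert.mp hj).resolve_left hne)
        · rw [hmul (-1), hnew]
          have heq : ∀ i, v i + A i a * (-1) = v i - A i a := fun i => by ring
          simp only [heq]
          calc ∑ i, A i a ^ 2 + ∑ j ∈ S, ∑ i, A i j ^ 2
              ≤ ∑ i, A i a ^ 2 + ∑ i, v i ^ 2 := by linarith
            _ ≤ ∑ i, (v i - A i a) ^ 2 := by linarith

/-- If every `k`-subset of `G` has `f`-sum at most `M`, then the total sum is
at most `(|G|/k)·M` (no rounding loss). -/
lemma sum_le_card_div_mul {ι : Type*} [DecidableEq ι] (G : Finset ι) (f : ι → ℝ)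
    (hf : ∀ j ∈ G, 0 ≤ f j) (k : ℕ) (hk0 : 0 < k) (hkG : k ≤ G.card) (M : ℝ)
    (hM : ∀ S ⊆ G, S.card = k → ∑ j ∈ S, f j ≤ M) :
    ∑ j ∈ G, f j ≤ (G.card : ℝ) / k * M := by
  classical
  have hk0' : (0:ℝ) < (k:ℝ) := by exact_mod_cast hk0
  have hne : (G.powersetCard k).Nonempty := Finset.powersetCard_nonempty.mpr hkG
  obtain ⟨S₀, hS₀mem, hS₀max⟩ := Finset.exists_max_image (G.powersetCard k)
    (fun S => ∑ j ∈ S, f j) hne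
  obtain ⟨hS₀sub, hS₀card⟩ := Finset.mem_powersetCard.mp hS₀mem
  have hS₀ne : S₀.Nonempty := Finset.card_pos.mp (by omega)
  have hout : ∀ j ∈ G \ S₀, (k:ℝ) * f j ≤ ∑ x ∈ S₀, f x := by
    intro j hj
    obtain ⟨hjG, hjS₀⟩ := Finset.mem_sdiff.mp hj
    obtain ⟨j', hj'S₀, hj'min⟩ := Finset.exists_min_image S₀ f hS₀ne
    have hswap : f j ≤ f j' := by
      by_contra hlt
      push_neg at hlt
      have hjerase : j ∉ S₀.erase j' := fun h => hjS₀ (Finset.erase_subset _ _ h)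
      have hS₁sub : insert j (S₀.erase j') ⊆ G :=
        Finset.insert_subset hjG ((Finset.erase_subset _ _).trans hS₀sub)
      have hS₁card : (insert j (S₀.erase j')).card = k := by
        rw [Finset.card_insert_of_notMem hjerase, Finset.card_erase_of_mem hj'S₀, hS₀card]
        omega
      have hmem : insert j (S₀.erase j') ∈ G.powersetCard k :=
        Finset.mem_powersetCard.mpr ⟨hS₁sub, hS₁card⟩
      have h1 : ∑ x ∈ insert j (S₀.erase j'), f x = f j + (∑ x ∈ S₀, f x - f j') := by
        rw [Finset.sum_insert hjerase, Finset.sum_erase_eq_sub hj'S₀]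
      have h2 := hS₀max _ hmem
      simp only [h1] at h2
      linarith
    have h3 : (k:ℝ) * f j' ≤ ∑ x ∈ S₀, f x := by
      calc (k:ℝ) * f j' = ∑ _x ∈ S₀, f j' := by
            rw [Finset.sum_const, hS₀card, nsmul_eq_mul]
        _ ≤ ∑ x ∈ S₀, f x := Finset.sum_le_sum fun x hx => hj'min x hx
    nlinarith [mul_le_mul_of_nonneg_left hswap hk0'.le]
  have hS₀M : ∑ x ∈ S₀, f x ≤ M := hM S₀ hS₀sub hS₀card
  have hS₀nonneg : 0 ≤ ∑ x ∈ S₀, f x := Finset.sum_nonneg fun x hx => hf x (hS₀sub hx)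
  have hsplit : ∑ j ∈ G, f j = ∑ j ∈ G \ S₀, f j + ∑ j ∈ S₀, f j :=
    (Finset.sum_sdiff hS₀sub).symm
  have houtsum : ∑ j ∈ G \ S₀, f j ≤ ((G.card : ℝ) - k) / k * ∑ x ∈ S₀, f x := by
    have hcard : ((G \ S₀).card : ℝ) = (G.card : ℝ) - k := by
      rw [Finset.card_sdiff_of_subset hS₀sub, hS₀card]
      have : k ≤ G.card := hkG
      push_cast [Nat.cast_sub this]
      ring
    calc ∑ j ∈ G \ S₀, f j ≤ ∑ _j ∈ G \ S₀, (∑ x ∈ S₀, f x) / k := by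
          refine Finset.sum_le_sum fun j hj => ?_
          rw [le_div_iff₀ hk0']
          calc f j * k = k * f j := by ring
            _ ≤ ∑ x ∈ S₀, f x := hout j hj
      _ = ((G.card : ℝ) - k) / k * ∑ x ∈ S₀, f x := by
          rw [Finset.sum_const, nsmul_eq_mul, hcard]
          ring
  have hfactor : (1 + ((G.card : ℝ) - k) / k) = (G.card : ℝ) / k := by
    field_simp
    ring
  have hcoef : (0:ℝ) ≤ (G.card : ℝ) / k := by positivity
  calc ∑ j ∈ G, f j = ∑ j ∈ G \ S₀, f j + ∑ j ∈ S₀, f j := hsplit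
    _ ≤ ((G.card : ℝ) - k) / k * ∑ x ∈ S₀, f x + ∑ x ∈ S₀, f x := by linarith
    _ = (G.card : ℝ) / k * ∑ x ∈ S₀, f x := by rw [← hfactor]; ring
    _ ≤ (G.card : ℝ) / k * M := mul_le_mul_of_nonneg_left hS₀M hcoef

theorem rip_dimension_lower_bound_p_gt_two :
    ∃ c : ℝ, 0 < c ∧
      ∀ (m n k : ℕ) (p D : ℝ) (A : Matrix (Fin m) (Fin n) ℝ),
        1 ≤ k → k ≤ n → 1 ≤ m → 2 < p → 1 < D →
        (∀ x : Fin n → ℝ, Set.ncard {i | x i ≠ 0} ≤ k →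
          (∑ i, |x i| ^ p) ^ (1 / p) ≤ (∑ i, |A.mulVec x i| ^ p) ^ (1 / p) ∧
          (∑ i, |A.mulVec x i| ^ p) ^ (1 / p) ≤ D * (∑ i, |x i| ^ p) ^ (1 / p)) →
        (m : ℝ) ≥ (n : ℝ) / (2 * k) ∨
        (m : ℝ) ≥ c * (k : ℝ) ^ p / D ^ (p ^ 2 / (p - 2)) := by
  classical
  refine ⟨1, one_pos, ?_⟩
  intro m n k p D A hk hkn hm hp hD H
  by_cases hfirst : (n:ℝ)/(2*k) ≤ (m:ℝ)
  · exact Or.inl hfirst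
  right
  push_neg at hfirst
  have hp0 : (0:ℝ) < p := by linarith
  have hpne : p ≠ 0 := ne_of_gt hp0
  have hp2 : (0:ℝ) < p - 2 := by linarith
  have hD0 : (0:ℝ) < D := by linarith
  have hk0 : (0:ℝ) < (k:ℝ) := by exact_mod_cast hk
  have hm0 : (0:ℝ) < (m:ℝ) := by exact_mod_cast hm
  have hm1 : (1:ℝ) ≤ (m:ℝ) := by exact_mod_cast hm
  -- power form of the RIP hypothesis
  have key : ∀ x : Fin n → ℝ, Set.ncard {i | x i ≠ 0} ≤ k →
      (∑ i, |x i| ^ p ≤ ∑ i, |A.mulVec x i| ^ p) ∧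
      (∑ i, |A.mulVec x i| ^ p ≤ D ^ p * ∑ i, |x i| ^ p) := by
    intro x hx
    obtain ⟨h1, h2⟩ := H x hx
    have hX : (0:ℝ) ≤ ∑ i, |x i| ^ p :=
      Finset.sum_nonneg fun i _ => Real.rpow_nonneg (abs_nonneg _) _
    have hY : (0:ℝ) ≤ ∑ i, |A.mulVec x i| ^ p :=
      Finset.sum_nonneg fun i _ => Real.rpow_nonneg (abs_nonneg _) _
    constructor
    · have h3 := Real.rpow_le_rpow (Real.rpow_nonneg hX _) h1 hp0.le
      rwa [← Real.rpow_mul hX, ← Real.rpow_mul hY, one_div_mul_cancel hpne,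
        Real.rpow_one, Real.rpow_one] at h3
    · have h3 := Real.rpow_le_rpow (Real.rpow_nonneg hY _) h2 hp0.le
      rwa [Real.mul_rpow hD0.le (Real.rpow_nonneg hX _), ← Real.rpow_mul hX,
        ← Real.rpow_mul hY, one_div_mul_cancel hpne, Real.rpow_one, Real.rpow_one] at h3
  -- columns
  have hsingle : ∀ j : Fin n, Set.ncard {i | (Pi.single j 1 : Fin n → ℝ) i ≠ 0} ≤ k := by
    intro j
    have hsub : {i | (Pi.single j 1 : Fin n → ℝ) i ≠ 0} ⊆ {j} := by
      intro i hi
      simp only [Set.mem_setOf_eq, ne_eq] at hi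
      rcases eq_or_ne i j with rfl | hne
      · exact Set.mem_singleton _
      · simp [Pi.single_eq_of_ne hne] at hi
    calc Set.ncard {i | (Pi.single j 1 : Fin n → ℝ) i ≠ 0} ≤ Set.ncard {j} :=
          Set.ncard_le_ncard hsub (Set.finite_singleton j)
      _ = 1 := Set.ncard_singleton j
      _ ≤ k := hk
  have hsinglesum : ∀ j : Fin n, ∑ i, |(Pi.single j 1 : Fin n → ℝ) i| ^ p = 1 := by
    intro j
    rw [Finset.sum_eq_single j]
    · simp
    · intro i _ hne
      rw [Pi.single_eq_of_ne hne, abs_zero, Real.zero_rpow hpne]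
    · intro h; exact absurd (Finset.mem_univ j) h
  have hmulsingle : ∀ j : Fin n, ∀ i, A.mulVec ((Pi.single j 1 : Fin n → ℝ)) i = A i j := by
    intro j i
    rw [Matrix.mulVec_single]
    exact mul_one _
  have col_low : ∀ j : Fin n, (1:ℝ) ≤ ∑ i, |A i j| ^ p := by
    intro j
    have h := (key _ (hsingle j)).1
    rw [hsinglesum j] at h
    simpa only [hmulsingle j] using h
  have col_up : ∀ j : Fin n, ∑ i, |A i j| ^ p ≤ D ^ p := by
    intro j
    have h := (key _ (hsingle j)).2
    rw [hsinglesum j, mul_one] at h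
    simpa only [hmulsingle j] using h
  -- sign vectors supported on a set S of size ≤ k
  have sign_up : ∀ (S : Finset (Fin n)), S.card ≤ k → ∀ σ : Fin n → ℝ,
      (∀ j, j ∉ S → σ j = 0) → (∀ j ∈ S, σ j = 1 ∨ σ j = -1) →
      ∑ i, |A.mulVec σ i| ^ p ≤ D ^ p * S.card := by
    intro S hS σ hσ0 hσ1
    have hsupp : Set.ncard {j | σ j ≠ 0} ≤ k := by
      have hsub : {j | σ j ≠ 0} ⊆ ↑S := by
        intro j hj
        by_contra hns
        exact hj (hσ0 j hns)
      calc Set.ncard {j | σ j ≠ 0} ≤ Set.ncard (↑S : Set (Fin n)) :=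
            Set.ncard_le_ncard hsub S.finite_toSet
        _ = S.card := Set.ncard_coe_finset S
        _ ≤ k := hS
    have hσsum : ∑ j, |σ j| ^ p = S.card := by
      rw [← Finset.sum_subset (Finset.subset_univ S) (fun j _ hj => by
        rw [hσ0 j hj, abs_zero, Real.zero_rpow hpne])]
      rw [Finset.sum_congr rfl (fun j hj => ?_), Finset.sum_const, nsmul_eq_mul, mul_one]
      rcases hσ1 j hj with h | h <;> rw [h] <;> norm_num
    have h := (key σ hsupp).2
    rw [hσsum] at h
    exact h
  -- threshold
  set τ : ℝ := D * (k:ℝ) ^ (1/p - 1) with hτdef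
  have hτ0 : 0 < τ := mul_pos hD0 (Real.rpow_pos_of_pos hk0 _)
  -- each row has fewer than k entries above the threshold
  have row_small : ∀ i : Fin m, ((univ : Finset (Fin n)).filter fun j => τ < |A i j|).card < k := by
    intro i
    by_contra hcon
    push_neg at hcon
    obtain ⟨S, hSsub, hScard⟩ := Finset.exists_subset_card_eq hcon
    set σ : Fin n → ℝ := fun j => if j ∈ S then (if 0 ≤ A i j then (1:ℝ) else -1) else 0 with hσdef
    have hσ0 : ∀ j, j ∉ S → σ j = 0 := fun j hj => by simp [hσdef, hj]
    have hσ1 : ∀ j ∈ S, σ j = 1 ∨ σ j = -1 := by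
      intro j hj
      simp only [hσdef, if_pos hj]
      rcases le_or_gt 0 (A i j) with h | h
      · left; rw [if_pos h]
      · right; rw [if_neg (not_le.mpr h)]
    have hAσ : A.mulVec σ i = ∑ j ∈ S, |A i j| := by
      show ∑ j, A i j * σ j = _
      rw [← Finset.sum_subset (Finset.subset_univ S) (fun j _ hj => by
        rw [hσ0 j hj, mul_zero])]
      refine Finset.sum_congr rfl fun j hj => ?_
      simp only [hσdef, if_pos hj]
      rcases le_or_gt 0 (A i j) with h | h
      · rw [if_pos h, mul_one, abs_of_nonneg h]
      · rw [if_neg (not_le.mpr h), abs_of_neg h]; ring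
    have hSne : S.Nonempty := Finset.card_pos.mp (by omega)
    have hlt : (k:ℝ) * τ < ∑ j ∈ S, |A i j| := by
      have h := Finset.sum_lt_sum_of_nonempty hSne
        (f := fun _ => τ) (g := fun j => |A i j|) (fun j hj => (Finset.mem_filter.mp (hSsub hj)).2)
      rwa [Finset.sum_const, hScard, nsmul_eq_mul] at h
    have hτk0 : (0:ℝ) ≤ (k:ℝ) * τ := by positivity
    have h1 : ((k:ℝ) * τ) ^ p < (∑ j ∈ S, |A i j|) ^ p :=
      Real.rpow_lt_rpow hτk0 hlt hp0
    have h2 : (∑ j ∈ S, |A i j|) ^ p ≤ ∑ i', |A.mulVec σ i'| ^ p := by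
      have habs : (∑ j ∈ S, |A i j|) = |A.mulVec σ i| := by
        rw [hAσ, abs_of_nonneg (Finset.sum_nonneg fun j _ => abs_nonneg _)]
      rw [habs]
      exact Finset.single_le_sum (f := fun i' => |A.mulVec σ i'| ^ p)
        (fun i' _ => Real.rpow_nonneg (abs_nonneg _) _) (Finset.mem_univ i)
    have h3 : ∑ i', |A.mulVec σ i'| ^ p ≤ D ^ p * k := by
      have := sign_up S (le_of_eq hScard) σ hσ0 hσ1
      rwa [hScard] at this
    have h4 : ((k:ℝ) * τ) ^ p = D ^ p * k := by
      have hkk : (k:ℝ) * τ = D * (k:ℝ) ^ (1/p) := by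
        rw [hτdef]
        rw [show (k:ℝ) * (D * (k:ℝ) ^ (1/p - 1)) = D * ((k:ℝ) ^ (1:ℝ) * (k:ℝ) ^ (1/p - 1)) by
          rw [Real.rpow_one]; ring]
        rw [← Real.rpow_add hk0]
        norm_num
      rw [hkk, Real.mul_rpow hD0.le (Real.rpow_nonneg hk0.le _),
        ← Real.rpow_mul hk0.le, one_div_mul_cancel hpne, Real.rpow_one]
    rw [h4] at h1
    linarith
  -- good columns: all entries at most τ
  set Good : Finset (Fin n) := (univ : Finset (Fin n)).filter (fun j => ∀ i, |A i j| ≤ τ)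
    with hGooddef
  have hGoodmem : ∀ j ∈ Good, ∀ i, |A i j| ≤ τ := fun j hj => (Finset.mem_filter.mp hj).2
  -- counting: n ≤ |Good| + m*k
  have hcount : n ≤ Good.card + m * k := by
    have hcover : (univ : Finset (Fin n)) ⊆
        Good ∪ (univ : Finset (Fin m)).biUnion (fun i => univ.filter fun j => τ < |A i j|) := by
      intro j _
      by_cases hg : ∀ i, |A i j| ≤ τ
      · exact Finset.mem_union_left _ (Finset.mem_filter.mpr ⟨Finset.mem_univ j, hg⟩)
      · push_neg at hg
        obtain ⟨i, hi⟩ := hg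
        exact Finset.mem_union_right _ (Finset.mem_biUnion.mpr
          ⟨i, Finset.mem_univ i, Finset.mem_filter.mpr ⟨Finset.mem_univ j, hi⟩⟩)
    have h1 : n = (univ : Finset (Fin n)).card := by rw [Finset.card_univ, Fintype.card_fin]
    have h2 := Finset.card_le_card hcover
    have h3 := Finset.card_union_le Good
      ((univ : Finset (Fin m)).biUnion (fun i => univ.filter fun j => τ < |A i j|))
    have h4 : ((univ : Finset (Fin m)).biUnion
        (fun i => univ.filter fun j => τ < |A i j|)).card ≤ m * k := by
      calc ((univ : Finset (Fin m)).biUnion (fun i => univ.filter fun j => τ < |A i j|)).card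
          ≤ ∑ i : Fin m, (univ.filter fun j => τ < |A i j|).card := Finset.card_biUnion_le
        _ ≤ ∑ _i : Fin m, k := Finset.sum_le_sum fun i _ => (row_small i).le
        _ = m * k := by rw [Finset.sum_const, Finset.card_univ, Fintype.card_fin, smul_eq_mul]
    omega
  -- from the first disjunct failing: 2km < n
  have hmn : (m:ℝ) * (2*(k:ℝ)) < n := by
    have h2k : (0:ℝ) < 2*(k:ℝ) := by positivity
    exact (lt_div_iff₀ h2k).mp hfirst
  have hGoodk : (k:ℝ) ≤ (Good.card : ℝ) := by
    have h1 : (n:ℝ) ≤ (Good.card : ℝ) + (m:ℝ)*(k:ℝ) := by exact_mod_cast hcount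
    nlinarith [mul_le_mul_of_nonneg_left hm1 hk0.le]
  have hGoodkNat : k ≤ Good.card := by exact_mod_cast hGoodk
  -- Frobenius bound over k-subsets
  have frob : ∀ S : Finset (Fin n), S.card = k →
      ∑ j ∈ S, ∑ i, A i j ^ 2 ≤ (m:ℝ) ^ (1 - 2/p) * (D ^ p * (k:ℝ)) ^ (2/p) := by
    intro S hS
    obtain ⟨ε, hε0, hε1, hεsum⟩ := exists_signs A S
    have h1 : ∑ i, A.mulVec ε i ^ 2 ≤ (m:ℝ) ^ (1-2/p) * (∑ i, |A.mulVec ε i| ^ p) ^ (2/p) :=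
      sum_sq_le_rpow hm hp (A.mulVec ε)
    have h2 : ∑ i, |A.mulVec ε i| ^ p ≤ D ^ p * (k:ℝ) := by
      have := sign_up S (le_of_eq hS) ε hε0 hε1
      rwa [hS] at this
    have h3 : (∑ i, |A.mulVec ε i| ^ p) ^ (2/p) ≤ (D ^ p * (k:ℝ)) ^ (2/p) :=
      Real.rpow_le_rpow (Finset.sum_nonneg fun i _ => Real.rpow_nonneg (abs_nonneg _) _)
        h2 (by positivity)
    calc ∑ j ∈ S, ∑ i, A i j ^ 2 ≤ ∑ i, A.mulVec ε i ^ 2 := hεsum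
      _ ≤ (m:ℝ) ^ (1-2/p) * (∑ i, |A.mulVec ε i| ^ p) ^ (2/p) := h1
      _ ≤ (m:ℝ) ^ (1-2/p) * (D ^ p * (k:ℝ)) ^ (2/p) := by
          exact mul_le_mul_of_nonneg_left h3 (Real.rpow_nonneg hm0.le _)
  -- average over Good
  set M : ℝ := (m:ℝ) ^ (1 - 2/p) * (D ^ p * (k:ℝ)) ^ (2/p) with hMdef
  have havg : ∑ j ∈ Good, ∑ i, A i j ^ 2 ≤ (Good.card : ℝ) / k * M :=
    sum_le_card_div_mul Good (fun j => ∑ i, A i j ^ 2)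
      (fun j _ => Finset.sum_nonneg fun i _ => sq_nonneg _) k hk hGoodkNat M
      (fun S _ hS => frob S hS)
  -- per good column Hölder
  have good_one : ∀ j ∈ Good, (1:ℝ) ≤ τ ^ (p-2) * ∑ i, A i j ^ 2 := by
    intro j hj
    have hentry : ∀ i, |A i j| ^ p ≤ τ ^ (p-2) * A i j ^ 2 := by
      intro i
      rcases eq_or_ne (A i j) 0 with h0 | h0
      · rw [h0, abs_zero, Real.zero_rpow hpne]
        positivity
      · have habs : 0 < |A i j| := abs_pos.mpr h0
        have hsplit : |A i j| ^ p = |A i j| ^ (p-2) * A i j ^ 2 := by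
          have h2 : A i j ^ 2 = |A i j| ^ ((2:ℕ):ℝ) := by
            rw [Real.rpow_natCast |A i j| 2, sq_abs]
          rw [h2, ← Real.rpow_add habs]
          norm_num
        rw [hsplit]
        exact mul_le_mul_of_nonneg_right
          (Real.rpow_le_rpow habs.le (hGoodmem j hj i) hp2.le) (sq_nonneg _)
    calc (1:ℝ) ≤ ∑ i, |A i j| ^ p := col_low j
      _ ≤ ∑ i, τ ^ (p-2) * A i j ^ 2 := Finset.sum_le_sum fun i _ => hentry i
      _ = τ ^ (p-2) * ∑ i, A i j ^ 2 := by rw [Finset.mul_sum]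
  -- sum over Good and divide
  have hkey : (k:ℝ) ≤ τ ^ (p-2) * M := by
    have hG0 : (0:ℝ) < (Good.card:ℝ) := lt_of_lt_of_le hk0 hGoodk
    have h1 : (Good.card:ℝ) ≤ τ ^ (p-2) * ∑ j ∈ Good, ∑ i, A i j ^ 2 := by
      calc (Good.card:ℝ) = ∑ _j ∈ Good, (1:ℝ) := by
            rw [Finset.sum_const, nsmul_eq_mul, mul_one]
        _ ≤ ∑ j ∈ Good, τ ^ (p-2) * ∑ i, A i j ^ 2 := Finset.sum_le_sum good_one
        _ = τ ^ (p-2) * ∑ j ∈ Good, ∑ i, A i j ^ 2 := by rw [Finset.mul_sum]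
    have h2 : (Good.card:ℝ) ≤ τ ^ (p-2) * ((Good.card : ℝ) / k * M) := by
      refine h1.trans (mul_le_mul_of_nonneg_left havg (Real.rpow_nonneg hτ0.le _))
      -- done
    have h3 : (Good.card:ℝ) * (k:ℝ) ≤ (Good.card:ℝ) * (τ ^ (p-2) * M) := by
      have : τ ^ (p-2) * ((Good.card : ℝ) / k * M) = (Good.card:ℝ) * (τ ^ (p-2) * M) / k := by
        ring
      rw [this] at h2
      calc (Good.card:ℝ) * (k:ℝ) ≤ ((Good.card:ℝ) * (τ ^ (p-2) * M) / k) * k :=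
            mul_le_mul_of_nonneg_right h2 hk0.le
        _ = (Good.card:ℝ) * (τ ^ (p-2) * M) := by field_simp
    have h4 : (k:ℝ) * (Good.card:ℝ) ≤ (τ ^ (p-2) * M) * (Good.card:ℝ) := by
      calc (k:ℝ)*(Good.card:ℝ) = (Good.card:ℝ)*(k:ℝ) := by ring
        _ ≤ (Good.card:ℝ) * (τ^(p-2)*M) := h3
        _ = (τ^(p-2)*M)*(Good.card:ℝ) := by ring
    exact le_of_mul_le_mul_right h4 hG0
  -- final algebra
  have e1 : τ ^ (p-2) = D ^ (p-2) * (k:ℝ) ^ ((1/p - 1)*(p-2)) := by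
    rw [hτdef, Real.mul_rpow hD0.le (Real.rpow_nonneg hk0.le _), ← Real.rpow_mul hk0.le]
  have e2 : (D ^ p * (k:ℝ)) ^ (2/p) = D ^ (p*(2/p)) * (k:ℝ) ^ (2/p) := by
    rw [Real.mul_rpow (Real.rpow_nonneg hD0.le _) hk0.le, ← Real.rpow_mul hD0.le]
  have hkey2 : (k:ℝ) ≤ D ^ p * ((k:ℝ) ^ ((1/p-1)*(p-2) + 2/p) * (m:ℝ) ^ (1-2/p)) := by
    have h := hkey
    rw [hMdef, e1, e2] at h
    have hcomb : D ^ (p-2) * (k:ℝ) ^ ((1/p - 1)*(p-2)) *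
        ((m:ℝ) ^ (1-2/p) * (D ^ (p*(2/p)) * (k:ℝ) ^ (2/p)))
        = D ^ ((p-2) + p*(2/p)) * ((k:ℝ) ^ ((1/p-1)*(p-2) + 2/p) * (m:ℝ) ^ (1-2/p)) := by
      rw [Real.rpow_add hD0, Real.rpow_add hk0]
      ring
    rw [hcomb] at h
    have hexp : (p-2) + p*(2/p) = p := by field_simp; ring
    rwa [hexp] at h
  set a : ℝ := (1/p-1)*(p-2) + 2/p with hadef
  have hka : (0:ℝ) < (k:ℝ) ^ a := Real.rpow_pos_of_pos hk0 _
  have hstep : (k:ℝ) ^ (p-2) ≤ D ^ p * (m:ℝ) ^ (1-2/p) := by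
    have h1 : (k:ℝ) ^ (p-2) * (k:ℝ) ^ a = (k:ℝ) := by
      rw [← Real.rpow_add hk0]
      have hone : (p-2) + a = 1 := by rw [hadef]; field_simp; ring
      rw [hone, Real.rpow_one]
    have h2 : (k:ℝ)^(p-2) * (k:ℝ)^a ≤ (D^p * (m:ℝ)^(1-2/p)) * (k:ℝ)^a := by
      rw [h1]
      calc (k:ℝ) ≤ D^p * ((k:ℝ)^a * (m:ℝ)^(1-2/p)) := hkey2
        _ = (D^p * (m:ℝ)^(1-2/p)) * (k:ℝ)^a := by ring
    exact le_of_mul_le_mul_right h2 hka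
  have hr0 : (0:ℝ) < p/(p-2) := by positivity
  have hfinal : (k:ℝ) ^ p ≤ D ^ (p^2/(p-2)) * (m:ℝ) := by
    have h1 := Real.rpow_le_rpow (Real.rpow_nonneg hk0.le _) hstep hr0.le
    rw [← Real.rpow_mul hk0.le] at h1
    rw [Real.mul_rpow (Real.rpow_nonneg hD0.le _) (Real.rpow_nonneg hm0.le _),
        ← Real.rpow_mul hD0.le, ← Real.rpow_mul hm0.le] at h1
    have ek : (p-2)*(p/(p-2)) = p := by field_simp
    have eD : p*(p/(p-2)) = p^2/(p-2) := by rw [sq]; ring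
    have em : (1-2/p)*(p/(p-2)) = 1 := by field_simp
    rw [ek, eD, em, Real.rpow_one] at h1
    exact h1
  rw [ge_iff_le, one_mul, div_le_iff₀ (Real.rpow_pos_of_pos hD0 _)]
  calc (k:ℝ)^p ≤ D ^ (p^2/(p-2)) * m := hfinal
    _ = m * D ^ (p^2/(p-2)) := by ring
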